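/- Aperiodicity lifts through ideals: let S be finite, T an ideal of S, and J a J-class directly above T. If f^n = f^{n+1} for every f in Cayley(S,T) and g^l = g^{l+1} for every g in Cayley(S,J^tr), then h^{n+l} = h^{n+l+1} for every h in Cayley(S, T ∪ J). -/

import Mathlib

open Classical in
/-- φ_s([a_1,...,a_n]) = [s a_1, s a_1 a_2, ..., s a_1 ⋯ a_n] -/
def phi {S : Type*} [Mul S] (s : S) (l : List S) : List S :=
  (l.scanl (· * ·) s).tail

open Classical in
/-- The restriction of φ_s to words over a subset I of S (when I is an ideal,
φ_s maps words over I to words over I, so the `dite` always takes the first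
branch). -/
noncomputable def resPhi {S : Type*} [Semigroup S] (I : Set S) (s : S) :
    Function.End {l : List S // ∀ x ∈ l, x ∈ I} :=
  fun w => if h : ∀ x ∈ phi s w.1, x ∈ I then ⟨phi s w.1, h⟩ else w

/-- Cayley(S, I): the semigroup of functions on words over I generated by the
restrictions of the maps φ_s, s ∈ S. -/
noncomputable def CayleyOn {S : Type*} [Semigroup S] (I : Set S) :
    Subsemigroup (Function.End {l : List S // ∀ x ∈ l, x ∈ I}) :=
  Subsemigroup.closure {f | ∃ s : S, f = resPhi I s}

/-- Green's J-relation (in a monoid, so that S¹ = S). -/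
def jrel {S : Type*} [Monoid S] (x y : S) : Prop :=
  (∃ a b : S, a * x * b = y) ∧ (∃ a b : S, a * y * b = x)

open Classical in
/-- Multiplication in the trace J^tr = J ∪ {0}: products falling outside J are
sent to 0 (`none`). -/
noncomputable def trMul {S : Type*} [Monoid S] (J : Set S) :
    Option J → Option J → Option J
  | some x, some y => if h : (x : S) * y ∈ J then some ⟨x * y, h⟩ else none
  | _, _ => none

open Classical in
/-- The left action of s ∈ S on the trace J^tr. -/
noncomputable def trAct {S : Type*} [Monoid S] (J : Set S) (s : S) :
    Option J → Option J
  | some x => if h : s * x ∈ J then some ⟨s * x, h⟩ else none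
  | none => none

/-- φ_s acting on words over the trace J^tr:
φ_s([j₁,...,jₙ]) = [s̄j₁, s̄j₁j₂, ..., s̄j₁⋯jₙ] computed in J^tr. -/
noncomputable def phiTr {S : Type*} [Monoid S] (J : Set S) (s : S) :
    Function.End (List (Option J)) :=
  fun l =>
    match l with
    | [] => []
    | j :: rest => List.scanl (trMul J) (trAct J s j) rest

/-- Cayley(S, J^tr): the semigroup of functions on words over J^tr generated by
the maps φ_s, s ∈ S. -/
noncomputable def CayleyTr {S : Type*} [Monoid S] (J : Set S) :
    Subsemigroup (Function.End (List (Option J))) :=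
  Subsemigroup.closure {f | ∃ s : S, f = phiTr J s}

/-! ### Auxiliary lemmas -/

section Aux
open Classical
variable {S : Type*} [Monoid S]

theorem phi_nil (s : S) : phi s ([] : List S) = [] := rfl

theorem phi_cons (s a : S) (w : List S) :
    phi s (a :: w) = List.scanl (· * ·) (s * a) w := by
  simp [phi, List.scanl_cons]

theorem scanl_eq_cons_phi (b : S) (w : List S) :
    List.scanl (· * ·) b w = b :: phi b w := by
  cases w with
  | nil => simp [phi]
  | cons x t => rw [List.scanl_cons, phi_cons]

theorem phi_cons' (s a : S) (w : List S) :
    phi s (a :: w) = (s * a) :: phi (s * a) w := by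
  rw [phi_cons, scanl_eq_cons_phi]

theorem length_phi (s : S) (w : List S) : (phi s w).length = w.length := by
  cases w with
  | nil => rfl
  | cons a t => rw [phi_cons, List.length_scanl]; rfl

theorem phi_append (s : S) (u v : List S) :
    phi s (u ++ v) = phi s u ++ phi (s * u.prod) v := by
  induction u generalizing s with
  | nil => simp [phi_nil]
  | cons a u ih =>
      rw [List.cons_append, phi_cons', ih, phi_cons', List.cons_append,
        List.prod_cons, mul_assoc]

theorem scanl_mem_right {A : Set S} (hA : ∀ x ∈ A, ∀ s : S, x * s ∈ A) :
    ∀ (w : List S) (c : S), c ∈ A → ∀ x ∈ List.scanl (· * ·) c w, x ∈ A := by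
  intro w
  induction w with
  | nil => intro c hc x hx; simp [List.scanl] at hx; rwa [hx]
  | cons a t ih =>
      intro c hc x hx
      rw [List.scanl_cons] at hx
      rcases List.mem_cons.1 hx with h | h
      · rwa [h]
      · exact ih (c * a) (hA c hc a) x h

theorem phi_mem {A : Set S} (hAl : ∀ x ∈ A, ∀ s : S, s * x ∈ A)
    (hAr : ∀ x ∈ A, ∀ s : S, x * s ∈ A) (s : S) (w : List S)
    (hw : ∀ x ∈ w, x ∈ A) : ∀ x ∈ phi s w, x ∈ A := by
  cases w with
  | nil => simp [phi_nil]
  | cons a t =>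
      rw [phi_cons]
      exact scanl_mem_right hAr t (s * a) (hAl a (hw a (by simp)) s)

/-- composite action on plain lists; first element of `L` acts last. -/
def applyW : List S → List S → List S
  | [], w => w
  | s :: L, w => phi s (applyW L w)

theorem applyW_cons (s : S) (L w : List S) :
    applyW (s :: L) w = phi s (applyW L w) := rfl

theorem length_applyW (L w : List S) : (applyW L w).length = w.length := by
  induction L with
  | nil => rfl
  | cons s L ih => rw [applyW_cons, length_phi, ih]

theorem applyW_mem {A : Set S} (hAl : ∀ x ∈ A, ∀ s : S, s * x ∈ A)
    (hAr : ∀ x ∈ A, ∀ s : S, x * s ∈ A) (L w : List S)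
    (hw : ∀ x ∈ w, x ∈ A) : ∀ x ∈ applyW L w, x ∈ A := by
  induction L with
  | nil => exact hw
  | cons s L ih => exact phi_mem hAl hAr s _ ih

/-- the multipliers acting on the suffix when `L` acts on `u ++ v`. -/
def gmul : List S → List S → List S
  | [], _ => []
  | s :: L, u => (s * (applyW L u).prod) :: gmul L u

theorem gmul_ne_nil {L : List S} (h : L ≠ []) (u : List S) : gmul L u ≠ [] := by
  cases L with
  | nil => exact absurd rfl h
  | cons s L => simp [gmul]

theorem applyW_append (L u v : List S) :
    applyW L (u ++ v) = applyW L u ++ applyW (gmul L u) v := by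
  induction L with
  | nil => rfl
  | cons s L ih =>
      rw [applyW_cons, ih, phi_append]
      rfl

end Aux

section Aux2
open Classical
variable {S : Type*} [Monoid S] {T J : Set S}
variable (hT : ∀ x ∈ T, ∀ s : S, s * x ∈ T ∧ x * s ∈ T)
variable (hdisj : Disjoint J T)

/-- embed an element of `S` into the trace. -/
noncomputable def toTr (J : Set S) (a : S) : Option J :=
  if h : a ∈ J then some ⟨a, h⟩ else none

/-- hat: embed a word over `S` into the trace. -/
noncomputable def hatJ (J : Set S) (w : List S) : List (Option J) :=
  w.map (toTr J)

theorem toTr_of_not_mem {a : S} (h : a ∉ J) : toTr J a = none := dif_neg h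

include hdisj in
theorem toTr_of_mem_T {a : S} (h : a ∈ T) : toTr J a = none :=
  dif_neg (fun hJ => Set.disjoint_left.mp hdisj hJ h)

include hT hdisj in
theorem trMul_toTr {c a : S} (hc : c ∈ T ∪ J) (ha : a ∈ T ∪ J) :
    trMul J (toTr J c) (toTr J a) = toTr J (c * a) := by
  by_cases hcJ : c ∈ J
  · by_cases haJ : a ∈ J
    · rw [toTr, dif_pos hcJ, toTr, dif_pos haJ]
      rfl
    · have haT : a ∈ T := ha.resolve_right haJ
      rw [toTr_of_not_mem haJ, toTr_of_mem_T hdisj (hT a haT c).1]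
      rcases toTr J c with _ | x <;> rfl
  · have hcT : c ∈ T := hc.resolve_right hcJ
    rw [toTr_of_not_mem hcJ, toTr_of_mem_T hdisj (hT c hcT a).2]
    rfl

include hT hdisj in
theorem trAct_toTr (s : S) {a : S} (ha : a ∈ T ∪ J) :
    trAct J s (toTr J a) = toTr J (s * a) := by
  by_cases haJ : a ∈ J
  · rw [toTr, dif_pos haJ]; rfl
  · have haT : a ∈ T := ha.resolve_right haJ
    rw [toTr_of_not_mem haJ, toTr_of_mem_T hdisj (hT a haT s).1]
    rfl

include hT hdisj in
theorem scanl_tr (hTJ : ∀ x ∈ T ∪ J, ∀ s : S, s * x ∈ T ∪ J ∧ x * s ∈ T ∪ J) :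
    ∀ (rest : List S), (∀ x ∈ rest, x ∈ T ∪ J) → ∀ (c : S), c ∈ T ∪ J →
    List.scanl (trMul J) (toTr J c) (hatJ J rest) = hatJ J (List.scanl (· * ·) c rest) := by
  intro rest
  induction rest with
  | nil => intro _ c _; rfl
  | cons a t ih =>
      intro hmem c hc
      have ha : a ∈ T ∪ J := hmem a (by simp)
      show List.scanl (trMul J) (toTr J c) (toTr J a :: hatJ J t) = _
      rw [List.scanl_cons, List.scanl_cons, trMul_toTr hT hdisj hc ha]
      show _ = toTr J c :: hatJ J (List.scanl (· * ·) (c * a) t)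
      rw [ih (fun x hx => hmem x (by simp [hx])) (c * a) (hTJ a ha c).1]

include hT hdisj in
theorem phiTr_hat (hTJ : ∀ x ∈ T ∪ J, ∀ s : S, s * x ∈ T ∪ J ∧ x * s ∈ T ∪ J)
    (s : S) (w : List S) (hw : ∀ x ∈ w, x ∈ T ∪ J) :
    phiTr J s (hatJ J w) = hatJ J (phi s w) := by
  cases w with
  | nil => rfl
  | cons a t =>
      have ha : a ∈ T ∪ J := hw a (by simp)
      show List.scanl (trMul J) (trAct J s (toTr J a)) (hatJ J t) = _
      rw [trAct_toTr hT hdisj s ha, phi_cons,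
        scanl_tr hT hdisj hTJ t (fun x hx => hw x (by simp [hx])) (s * a)
          ((hTJ a ha s).1)]

/-- composite trace action; first element of `L` acts last. -/
noncomputable def applyTrW (J : Set S) : List S → List (Option J) → List (Option J)
  | [], w => w
  | s :: L, w => phiTr J s (applyTrW J L w)

include hT hdisj in
theorem applyTrW_hat (hTJ : ∀ x ∈ T ∪ J, ∀ s : S, s * x ∈ T ∪ J ∧ x * s ∈ T ∪ J) :
    ∀ (L : List S) (w : List S), (∀ x ∈ w, x ∈ T ∪ J) →
    applyTrW J L (hatJ J w) = hatJ J (applyW L w) := by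
  intro L
  induction L with
  | nil => intro w _; rfl
  | cons s L ih =>
      intro w hw
      show phiTr J s (applyTrW J L (hatJ J w)) = _
      rw [ih w hw, phiTr_hat hT hdisj hTJ s _
        (applyW_mem (fun x hx s' => (hTJ x hx s').1) (fun x hx s' => (hTJ x hx s').2) L w hw)]
      rfl

theorem prod_phiTr_apply (J : Set S) :
    ∀ (L : List S) (x : List (Option J)), ((L.map (phiTr J)).prod) x = applyTrW J L x := by
  intro L
  induction L with
  | nil => intro x; rfl
  | cons s L ih =>
      intro x
      rw [List.map_cons, List.prod_cons]
      show phiTr J s (((L.map (phiTr J)).prod) x) = _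
      rw [ih x]
      rfl

theorem hat_takeWhile (J : Set S) :
    ∀ (x y : List S), hatJ J x = hatJ J y →
      x.takeWhile (fun a => decide (a ∈ J)) = y.takeWhile (fun a => decide (a ∈ J)) := by
  intro x
  induction x with
  | nil =>
      intro y hy
      cases y with
      | nil => rfl
      | cons b t => simp [hatJ] at hy
  | cons a t ih =>
      intro y hy
      cases y with
      | nil => simp [hatJ] at hy
      | cons b t' =>
          have h1 : toTr J a = toTr J b ∧ hatJ J t = hatJ J t' := by
            simpa [hatJ] using hy
          by_cases haJ : a ∈ J
          · have hbJ : b ∈ J := by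
              by_contra hbJ
              rw [toTr, dif_pos haJ, toTr, dif_neg hbJ] at h1
              exact absurd h1.1 (by simp)
            have hab : a = b := by
              have h2 := h1.1
              rw [toTr, dif_pos haJ, toTr, dif_pos hbJ] at h2
              exact congrArg Subtype.val (Option.some.inj h2)
            rw [hab, List.takeWhile_cons_of_pos (by simp [hbJ]),
              List.takeWhile_cons_of_pos (by simp [hbJ]), ih t' h1.2]
          · have hbJ : b ∉ J := by
              intro hbJ
              rw [toTr, dif_neg haJ, toTr, dif_pos hbJ] at h1
              exact absurd h1.1 (by simp)
            rw [List.takeWhile_cons_of_neg (by simp [haJ]),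
              List.takeWhile_cons_of_neg (by simp [hbJ])]

include hT hdisj in
theorem dropWhile_scanl_T (hTJ : ∀ x ∈ T ∪ J, ∀ s : S, s * x ∈ T ∪ J ∧ x * s ∈ T ∪ J) :
    ∀ (w : List S), (∀ x ∈ w, x ∈ T ∪ J) → ∀ (c : S), c ∈ T ∪ J →
    ∀ x ∈ (List.scanl (· * ·) c w).dropWhile (fun a => decide (a ∈ J)), x ∈ T := by
  intro w
  induction w with
  | nil =>
      intro _ c hc x hx
      by_cases hcJ : c ∈ J
      · simp [List.dropWhile, hcJ] at hx
      · simp [List.dropWhile, hcJ] at hx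
        rw [hx]
        exact hc.resolve_right hcJ
  | cons a t ih =>
      intro hmem c hc x hx
      have ha : a ∈ T ∪ J := hmem a (by simp)
      rw [List.scanl_cons, List.dropWhile_cons] at hx
      by_cases hcJ : c ∈ J
      · simp only [hcJ, decide_eq_true_eq, if_true, decide_eq_true] at hx
        exact ih (fun y hy => hmem y (by simp [hy])) (c * a) (hTJ a ha c).1 x hx
      · rw [if_neg (by simp [hcJ])] at hx
        have hcT : c ∈ T := hc.resolve_right hcJ
        rcases List.mem_cons.1 hx with h | h
        · rwa [h]
        · exact scanl_mem_right (fun y hy s' => (hT y hy s').2) t (c * a) (hT c hcT a).2 x h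

end Aux2

section Aux3
open Classical
variable {S : Type*} [Monoid S]

theorem list_prod_mem_closure {M : Type*} [Monoid M] {G : Set M} :
    ∀ L : List M, L ≠ [] → (∀ f ∈ L, f ∈ G) → L.prod ∈ Subsemigroup.closure G := by
  intro L
  induction L with
  | nil => intro h _; exact absurd rfl h
  | cons f L ih =>
      intro _ hmem
      cases L with
      | nil => simpa using Subsemigroup.subset_closure (hmem f (by simp))
      | cons g L' =>
          rw [List.prod_cons]
          exact mul_mem (Subsemigroup.subset_closure (hmem f (by simp)))
            (ih (by simp) (fun x hx => hmem x (by simp [hx])))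

theorem end_pow_apply {α : Type*} (g : Function.End α) :
    ∀ (m : ℕ) (x : α), (g ^ m) x = g^[m] x := by
  intro m
  induction m with
  | zero => intro x; rw [pow_zero]; rfl
  | succ k ih =>
      intro x
      show (g ^ k) (g x) = g^[k] (g x)
      exact ih (g x)

theorem end_pow_val {α : Type*} {P : α → Prop} (h : Function.End {x : α // P x})
    (N : α → α) (hc : ∀ x, (h x).val = N x.val) :
    ∀ (m : ℕ) (x : {x : α // P x}), ((h ^ m) x).val = N^[m] x.val := by
  intro m
  induction m with
  | zero => intro x; rw [pow_zero]; rfl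
  | succ k ih =>
      intro x
      rw [pow_succ, Function.iterate_succ_apply]
      have : (h ^ k * h) x = (h ^ k) (h x) := rfl
      rw [this, ih (h x), hc x]

theorem pow_stab {M : Type*} [Monoid M] {f : M} {l : ℕ} (h : f ^ l = f ^ (l + 1)) :
    ∀ m : ℕ, f ^ (l + m) = f ^ l := by
  intro m
  induction m with
  | zero => rfl
  | succ k ih =>
      have : l + (k + 1) = (l + k) + 1 := by ring
      rw [this, pow_succ, ih, ← pow_succ, ← h]

theorem prod_resPhi_val {I : Set S} (hIl : ∀ x ∈ I, ∀ s : S, s * x ∈ I)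
    (hIr : ∀ x ∈ I, ∀ s : S, x * s ∈ I) :
    ∀ (L : List S) (x : {l : List S // ∀ a ∈ l, a ∈ I}),
    (((L.map (resPhi I)).prod) x).val = applyW L x.val := by
  intro L
  induction L with
  | nil => intro x; rfl
  | cons s L ih =>
      intro x
      rw [List.map_cons, List.prod_cons]
      have h1 : ((resPhi I s) * ((L.map (resPhi I)).prod)) x
          = (resPhi I s) (((L.map (resPhi I)).prod) x) := rfl
      rw [h1]
      set y := ((L.map (resPhi I)).prod) x with hy
      have hyI : ∀ a ∈ y.val, a ∈ I := y.2
      have hmem : ∀ a ∈ phi s y.val, a ∈ I := phi_mem hIl hIr s y.val hyI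
      show ((if h : ∀ a ∈ phi s y.1, a ∈ I then
        (⟨phi s y.1, h⟩ : {l : List S // ∀ a ∈ l, a ∈ I}) else y)).val = _
      rw [dif_pos hmem]
      show phi s y.val = _
      rw [ih x]
      rfl

theorem CayleyOn_exists_list {I : Set S} {h : Function.End {l : List S // ∀ x ∈ l, x ∈ I}}
    (hh : h ∈ CayleyOn I) :
    ∃ L : List S, L ≠ [] ∧ h = (L.map (resPhi I)).prod := by
  induction hh using Subsemigroup.closure_induction with
  | mem f hf =>
      obtain ⟨s, rfl⟩ := hf
      exact ⟨[s], by simp, by simp⟩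
  | mul f g _ _ hf hg =>
      obtain ⟨L1, h1, rfl⟩ := hf
      obtain ⟨L2, h2, rfl⟩ := hg
      exact ⟨L1 ++ L2, by simp [h1], by simp⟩

end Aux3

/-- Aperiodicity lifts through ideals: let S be a finite semigroup (with
identity, as we may assume), T an ideal of S, and J a J-class directly above T
(i.e. T ∪ J is an ideal and J is disjoint from T).  If f^n = f^{n+1} for every
f ∈ Cayley(S,T) and g^l = g^{l+1} for every g ∈ Cayley(S,J^tr), then
h^{n+l} = h^{n+l+1} for every h ∈ Cayley(S, T ∪ J). -/
theorem aperiodicity_lifts {S : Type*} [Monoid S] [Fintype S]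
    (T J : Set S)
    (hT : ∀ x ∈ T, ∀ s : S, s * x ∈ T ∧ x * s ∈ T) (hTne : T.Nonempty)
    (hJ : ∃ j ∈ J, J = {x | jrel x j})
    (hdisj : Disjoint J T)
    (hTJ : ∀ x ∈ T ∪ J, ∀ s : S, s * x ∈ T ∪ J ∧ x * s ∈ T ∪ J)
    (n l : ℕ)
    (hn : ∀ f ∈ CayleyOn T, f ^ n = f ^ (n + 1))
    (hl : ∀ g ∈ CayleyTr J, g ^ l = g ^ (l + 1)) :
    ∀ h ∈ CayleyOn (T ∪ J), h ^ (n + l) = h ^ (n + l + 1) := by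
  classical
  intro h hh
  obtain ⟨L, hLne, rfl⟩ := CayleyOn_exists_list hh
  have hIl : ∀ x ∈ T ∪ J, ∀ s : S, s * x ∈ T ∪ J := fun x hx s => (hTJ x hx s).1
  have hIr : ∀ x ∈ T ∪ J, ∀ s : S, x * s ∈ T ∪ J := fun x hx s => (hTJ x hx s).2
  have hTl : ∀ x ∈ T, ∀ s : S, s * x ∈ T := fun x hx s => (hT x hx s).1
  have hTr : ∀ x ∈ T, ∀ s : S, x * s ∈ T := fun x hx s => (hT x hx s).2
  funext x
  apply Subtype.ext
  rw [end_pow_val _ (applyW L) (prod_resPhi_val hIl hIr L) (n + l) x,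
      end_pow_val _ (applyW L) (prod_resPhi_val hIl hIr L) (n + l + 1) x]
  set N : List S → List S := applyW L with hN
  set w : List S := x.val with hwdef
  have hw : ∀ a ∈ w, a ∈ T ∪ J := x.2
  -- if l = 0 then every element of T ∪ J is in T
  have hJ0 : l = 0 → ∀ a, a ∈ T ∪ J → a ∈ T := by
    intro hl0 a ha
    rcases ha with h1 | h1
    · exact h1
    · exfalso
      obtain ⟨t, ht⟩ := hTne
      have hg : phiTr J t ∈ CayleyTr J := Subsemigroup.subset_closure ⟨t, rfl⟩
      have h2 := hl _ hg
      rw [hl0, pow_zero, pow_one] at h2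
      have h3 : (1 : Function.End (List (Option J))) [some ⟨a, h1⟩]
          = phiTr J t [some ⟨a, h1⟩] := by rw [h2]
      have h4 : [some (⟨a, h1⟩ : J)] = [trAct J t (some ⟨a, h1⟩)] := h3
      simp only [List.cons.injEq, and_true] at h4
      by_cases hc : t * a ∈ J
      · exact Set.disjoint_left.mp hdisj hc (hT t ht a).2
      · rw [trAct, dif_neg hc] at h4
        exact absurd h4 (by simp)
  -- trace stabilization
  have hgT : (L.map (phiTr J)).prod ∈ CayleyTr J := by
    refine list_prod_mem_closure _ (by simp [hLne]) ?_
    rintro f hf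
    rw [List.mem_map] at hf
    obtain ⟨s, _, rfl⟩ := hf
    exact ⟨s, rfl⟩
  have hstabP : ∀ m : ℕ, ((L.map (phiTr J)).prod) ^ (l + m) = ((L.map (phiTr J)).prod) ^ l :=
    pow_stab (hl _ hgT)
  have hIiter : ∀ m : ℕ, ∀ a ∈ N^[m] w, a ∈ T ∪ J := by
    intro m
    induction m with
    | zero => exact hw
    | succ k ih =>
        rw [Function.iterate_succ_apply']
        exact applyW_mem hIl hIr L _ ih
  have hhat : ∀ m : ℕ, hatJ J (N^[m] w) = ((L.map (phiTr J)).prod ^ m) (hatJ J w) := by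
    intro m
    induction m with
    | zero => rw [pow_zero]; rfl
    | succ k ih =>
        rw [Function.iterate_succ_apply', pow_succ']
        have h5 : ((L.map (phiTr J)).prod * (L.map (phiTr J)).prod ^ k) (hatJ J w)
            = ((L.map (phiTr J)).prod) (((L.map (phiTr J)).prod ^ k) (hatJ J w)) := rfl
        rw [h5, ← ih, prod_phiTr_apply, applyTrW_hat hT hdisj hTJ L _ (hIiter k)]
  have hhatstab : ∀ m : ℕ, hatJ J (N^[l + m] w) = hatJ J (N^[l] w) := by
    intro m
    rw [hhat, hhat, hstabP]
  set u : List S := (N^[l] w).takeWhile (fun a => decide (a ∈ J)) with hu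
  have htake : ∀ m : ℕ, (N^[l + m] w).takeWhile (fun a => decide (a ∈ J)) = u := by
    intro m
    rw [hu]
    exact hat_takeWhile J _ _ (hhatstab m)
  have hsplit : ∀ m : ℕ, N^[l + m] w
      = u ++ (N^[l + m] w).dropWhile (fun a => decide (a ∈ J)) := by
    intro m
    conv_lhs => rw [← List.takeWhile_append_dropWhile (p := fun a => decide (a ∈ J)) (l := N^[l + m] w)]
    rw [htake m]
  set v : List S := (N^[l] w).dropWhile (fun a => decide (a ∈ J)) with hv
  have hvT : ∀ a ∈ v, a ∈ T := by
    rw [hv]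
    cases l with
    | zero =>
        intro a ha
        have ha' : a ∈ w := (List.dropWhile_sublist _).subset ha
        exact hJ0 rfl a (hw a ha')
    | succ k =>
        have he : N^[k + 1] w = N (N^[k] w) := Function.iterate_succ_apply' N k w
        cases L with
        | nil => exact absurd rfl hLne
        | cons s L' =>
            intro a ha
            rw [he] at ha
            have hzI : ∀ b ∈ applyW L' (N^[k] w), b ∈ T ∪ J :=
              applyW_mem hIl hIr L' _ (hIiter k)
            have ha2 : a ∈ (phi s (applyW L' (N^[k] w))).dropWhile
                (fun a => decide (a ∈ J)) := ha
            rcases hzdes : applyW L' (N^[k] w) with _ | ⟨b, z'⟩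
            · rw [hzdes] at ha2
              simp [phi_nil] at ha2
            · rw [hzdes] at ha2 hzI
              rw [phi_cons] at ha2
              have hbI : b ∈ T ∪ J := hzI b (by simp)
              exact dropWhile_scanl_T hT hdisj hTJ z'
                (fun y hy => hzI y (by simp [hy])) (s * b) (hIl b hbI s) a ha2
  have hulen : (applyW L u).length = u.length := length_applyW L u
  set M : List S → List S := applyW (gmul L u) with hM
  have hstep : ∀ m : ℕ, (N^[l + (m + 1)] w).dropWhile (fun a => decide (a ∈ J))
      = M ((N^[l + m] w).dropWhile (fun a => decide (a ∈ J))) := by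
    intro m
    have e1 : N^[l + (m + 1)] w = N (N^[l + m] w) := by
      rw [show l + (m + 1) = (l + m) + 1 by ring, Function.iterate_succ_apply']
    have e2 : N (N^[l + m] w)
        = applyW L u ++ M ((N^[l + m] w).dropWhile (fun a => decide (a ∈ J))) := by
      conv_lhs => rw [hsplit m]
      exact applyW_append L u _
    have e3 := (hsplit (m + 1)).symm.trans (e1.trans e2)
    exact (List.append_inj e3 hulen.symm).2
  have hvm : ∀ m : ℕ, (N^[l + m] w).dropWhile (fun a => decide (a ∈ J)) = M^[m] v := by
    intro m
    induction m with
    | zero =>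
        rw [Nat.add_zero, Function.iterate_zero_apply]
    | succ k ih => rw [hstep k, ih, Function.iterate_succ_apply']
  have hgM : ((gmul L u).map (resPhi T)).prod ∈ CayleyOn T := by
    refine list_prod_mem_closure _ (by simp [gmul_ne_nil hLne]) ?_
    rintro f hf
    rw [List.mem_map] at hf
    obtain ⟨s, _, rfl⟩ := hf
    exact ⟨s, rfl⟩
  have hnn := hn _ hgM
  have hMn : M^[n] v = M^[n + 1] v := by
    have h1 := end_pow_val _ (applyW (gmul L u)) (prod_resPhi_val hTl hTr (gmul L u)) n ⟨v, hvT⟩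
    have h2 := end_pow_val _ (applyW (gmul L u)) (prod_resPhi_val hTl hTr (gmul L u)) (n + 1)
      ⟨v, hvT⟩
    rw [hM, ← h1, ← h2, hnn]
  have f1 : N^[n + l] w = u ++ M^[n] v := by
    rw [show n + l = l + n by ring, hsplit n, hvm n]
  have f2 : N^[n + l + 1] w = u ++ M^[n + 1] v := by
    rw [show n + l + 1 = l + (n + 1) by ring, hsplit (n + 1), hvm (n + 1)]
  rw [f1, f2, hMn]
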